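/- arXiv:2203.05111 — 2 statements merged into one kernel-verified Lean document; each statement's English description precedes it below -/
import Mathlib

section
/- If Y and Z are random variables taking values in [0,1], then |E[Y²Z] − E[Y]²E[Z]| ≤ 2(Var[Y] + Var[Z]). -/
open MeasureTheory ProbabilityTheory

theorem abs_integral_sq_mul_sub_le_two_mul_var_add
    {Ω : Type*} [MeasureSpace Ω] (μ : Measure Ω) [IsProbabilityMeasure μ]
    (Y Z : Ω → ℝ) (hYm : AEMeasurable Y μ) (hZm : AEMeasurable Z μ)
    (hY0 : ∀ᵐ ω ∂μ, 0 ≤ Y ω) (hY1 : ∀ᵐ ω ∂μ, Y ω ≤ 1)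
    (hZ0 : ∀ᵐ ω ∂μ, 0 ≤ Z ω) (hZ1 : ∀ᵐ ω ∂μ, Z ω ≤ 1) :
    |(∫ ω, (Y ω) ^ 2 * Z ω ∂μ) - (∫ ω, Y ω ∂μ) ^ 2 * (∫ ω, Z ω ∂μ)| ≤
      2 * (variance Y μ + variance Z μ) := by
  set a := ∫ ω, Y ω ∂μ with ha
  set b := ∫ ω, Z ω ∂μ with hb
  have hY2 : MemLp Y 2 μ := memLp_of_bounded
    (by filter_upwards [hY0, hY1] with ω h0 h1; exact ⟨h0, h1⟩)
    hYm.aestronglyMeasurable 2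
  have hZ2 : MemLp Z 2 μ := memLp_of_bounded
    (by filter_upwards [hZ0, hZ1] with ω h0 h1; exact ⟨h0, h1⟩)
    hZm.aestronglyMeasurable 2
  have hYi : Integrable Y μ := hY2.integrable one_le_two
  have hZi : Integrable Z μ := hZ2.integrable one_le_two
  have hY2i : Integrable (fun ω => Y ω ^ 2) μ := hY2.integrable_sq
  have ha0 : 0 ≤ a := integral_nonneg_of_ae hY0
  have ha1 : a ≤ 1 := by
    calc a ≤ ∫ _ω, (1 : ℝ) ∂μ := integral_mono_ae hYi (integrable_const 1) hY1
    _ = 1 := by simp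
  have hb0 : 0 ≤ b := integral_nonneg_of_ae hZ0
  have hb1 : b ≤ 1 := by
    calc b ≤ ∫ _ω, (1 : ℝ) ∂μ := integral_mono_ae hZi (integrable_const 1) hZ1
    _ = 1 := by simp
  have hprodi : Integrable (fun ω => Y ω ^ 2 * Z ω) μ := by
    refine MemLp.integrable le_rfl (MemLp.of_bound
      (((hYm.pow_const 2).mul hZm).aestronglyMeasurable) 1 ?_)
    filter_upwards [hY0, hY1, hZ0, hZ1] with ω h0 h1 h2 h3
    rw [Real.norm_eq_abs, abs_mul, abs_of_nonneg (pow_nonneg h0 2), abs_of_nonneg h2]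
    nlinarith
  -- integrability of f = (Y² - a²)(Z - b)
  have hfm : AEStronglyMeasurable (fun ω => (Y ω ^ 2 - a ^ 2) * (Z ω - b)) μ :=
    (((hYm.pow_const 2).sub aemeasurable_const).mul (hZm.sub aemeasurable_const)).aestronglyMeasurable
  have hfi : Integrable (fun ω => (Y ω ^ 2 - a ^ 2) * (Z ω - b)) μ := by
    refine MemLp.integrable le_rfl (MemLp.of_bound hfm 1 ?_)
    filter_upwards [hY0, hY1, hZ0, hZ1] with ω h0 h1 h2 h3
    rw [Real.norm_eq_abs, abs_mul]
    have h1' : |Y ω ^ 2 - a ^ 2| ≤ 1 := abs_le.2 ⟨by nlinarith, by nlinarith⟩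
    have h2' : |Z ω - b| ≤ 1 := abs_le.2 ⟨by nlinarith, by nlinarith⟩
    calc |Y ω ^ 2 - a ^ 2| * |Z ω - b| ≤ 1 * 1 :=
      mul_le_mul h1' h2' (abs_nonneg _) zero_le_one
    _ = 1 := by ring
  -- variance formulas
  have hvarY : variance Y μ = (∫ ω, Y ω ^ 2 ∂μ) - a ^ 2 := by
    rw [variance_eq_sub hY2]; congr 1
  have hvarYsq : variance Y μ = ∫ ω, (Y ω - a) ^ 2 ∂μ := by
    rw [variance_eq_integral hYm]
  have hvarZsq : variance Z μ = ∫ ω, (Z ω - b) ^ 2 ∂μ := by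
    rw [variance_eq_integral hZm]
  -- expand the integral of f
  have hIf : ∫ ω, (Y ω ^ 2 - a ^ 2) * (Z ω - b) ∂μ
      = (∫ ω, Y ω ^ 2 * Z ω ∂μ) - b * ∫ ω, Y ω ^ 2 ∂μ := by
    have hexp : (fun ω => (Y ω ^ 2 - a ^ 2) * (Z ω - b))
        = fun ω => (Y ω ^ 2 * Z ω - b * Y ω ^ 2) - (a ^ 2 * Z ω - a ^ 2 * b) := by
      funext ω; ring
    have i1 : Integrable (fun ω => Y ω ^ 2 * Z ω - b * Y ω ^ 2) μ :=
      hprodi.sub (hY2i.const_mul b)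
    have i2 : Integrable (fun ω => a ^ 2 * Z ω - a ^ 2 * b) μ :=
      (hZi.const_mul (a ^ 2)).sub (integrable_const _)
    rw [hexp, integral_sub i1 i2,
      integral_sub hprodi (hY2i.const_mul b),
      integral_sub (hZi.const_mul (a ^ 2)) (integrable_const _),
      integral_const_mul, integral_const_mul, integral_const]
    simp [← hb]
  -- key identity
  have hId : (∫ ω, Y ω ^ 2 * Z ω ∂μ) - a ^ 2 * b
      = (∫ ω, (Y ω ^ 2 - a ^ 2) * (Z ω - b) ∂μ) + b * variance Y μ := by
    rw [hIf, hvarY]; ring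
  -- bound on the integral of f
  have hsqYi : Integrable (fun ω => (Y ω - a) ^ 2) μ := (hY2.sub (memLp_const a)).integrable_sq
  have hsqZi : Integrable (fun ω => (Z ω - b) ^ 2) μ := (hZ2.sub (memLp_const b)).integrable_sq
  have hfbound : |∫ ω, (Y ω ^ 2 - a ^ 2) * (Z ω - b) ∂μ| ≤ variance Y μ + variance Z μ := by
    calc |∫ ω, (Y ω ^ 2 - a ^ 2) * (Z ω - b) ∂μ|
        ≤ ∫ ω, ((Y ω - a) ^ 2 + (Z ω - b) ^ 2) ∂μ := by
          rw [← Real.norm_eq_abs]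
          refine norm_integral_le_of_norm_le (hsqYi.add hsqZi) ?_
          filter_upwards [hY0, hY1] with ω h0 h1
          rw [Real.norm_eq_abs]
          have hfac : |Y ω ^ 2 - a ^ 2| ≤ 2 * |Y ω - a| := by
            have : Y ω ^ 2 - a ^ 2 = (Y ω + a) * (Y ω - a) := by ring
            rw [this, abs_mul, abs_of_nonneg (by linarith : (0:ℝ) ≤ Y ω + a)]
            exact mul_le_mul_of_nonneg_right (by linarith) (abs_nonneg _)
          calc |(Y ω ^ 2 - a ^ 2) * (Z ω - b)| = |Y ω ^ 2 - a ^ 2| * |Z ω - b| := abs_mul _ _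
            _ ≤ (2 * |Y ω - a|) * |Z ω - b| :=
                mul_le_mul_of_nonneg_right hfac (abs_nonneg _)
            _ = 2 * |Y ω - a| * |Z ω - b| := by ring
            _ ≤ |Y ω - a| ^ 2 + |Z ω - b| ^ 2 := two_mul_le_add_sq _ _
            _ = (Y ω - a) ^ 2 + (Z ω - b) ^ 2 := by rw [sq_abs, sq_abs]
      _ = variance Y μ + variance Z μ := by
          rw [integral_add hsqYi hsqZi, hvarYsq, hvarZsq]
  have hvZ : 0 ≤ variance Z μ := variance_nonneg Z μ
  have hvY : 0 ≤ variance Y μ := variance_nonneg Y μ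
  have hbv : |b * variance Y μ| ≤ variance Y μ := by
    rw [abs_of_nonneg (mul_nonneg hb0 hvY)]
    nlinarith
  calc |(∫ ω, Y ω ^ 2 * Z ω ∂μ) - a ^ 2 * b|
      = |(∫ ω, (Y ω ^ 2 - a ^ 2) * (Z ω - b) ∂μ) + b * variance Y μ| := by rw [hId]
    _ ≤ |∫ ω, (Y ω ^ 2 - a ^ 2) * (Z ω - b) ∂μ| + |b * variance Y μ| := abs_add_le _ _
    _ ≤ 2 * (variance Y μ + variance Z μ) := by linarith
end

section
/- If Y and Z are nonnegative random variables satisfying Y + Z ≤ 1 almost surely, then Var[YZ] ≤ 8(Var[Y] + Var[Z]). -/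
open MeasureTheory ProbabilityTheory

theorem variance_mul_le_eight_mul_var_add
    {Ω : Type*} [MeasureSpace Ω] (μ : Measure Ω) [IsProbabilityMeasure μ]
    (Y Z : Ω → ℝ) (hYm : AEMeasurable Y μ) (hZm : AEMeasurable Z μ)
    (hY0 : ∀ᵐ ω ∂μ, 0 ≤ Y ω) (hZ0 : ∀ᵐ ω ∂μ, 0 ≤ Z ω)
    (hYZ : ∀ᵐ ω ∂μ, Y ω + Z ω ≤ 1) :
    variance (fun ω => Y ω * Z ω) μ ≤ 8 * (variance Y μ + variance Z μ) := by
  have hYb : ∀ᵐ ω ∂μ, Y ω ∈ Set.Icc (0:ℝ) 1 := by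
    filter_upwards [hY0, hZ0, hYZ] with ω h1 h2 h3
    exact ⟨h1, by linarith⟩
  have hZb : ∀ᵐ ω ∂μ, Z ω ∈ Set.Icc (0:ℝ) 1 := by
    filter_upwards [hY0, hZ0, hYZ] with ω h1 h2 h3
    exact ⟨h2, by linarith⟩
  have hWb : ∀ᵐ ω ∂μ, Y ω * Z ω ∈ Set.Icc (0:ℝ) 1 := by
    filter_upwards [hYb, hZb] with ω h1 h2
    exact ⟨mul_nonneg h1.1 h2.1, by nlinarith [h1.1, h1.2, h2.1, h2.2]⟩
  have hYℒ : MemLp Y 2 μ := memLp_of_bounded hYb hYm.aestronglyMeasurable 2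
  have hZℒ : MemLp Z 2 μ := memLp_of_bounded hZb hZm.aestronglyMeasurable 2
  have hWℒ : MemLp (fun ω => Y ω * Z ω) 2 μ :=
    memLp_of_bounded hWb (hYm.mul hZm).aestronglyMeasurable 2
  set mY := μ[Y] with hmY
  set mZ := μ[Z] with hmZ
  have hmZ0 : 0 ≤ mZ := integral_nonneg_of_ae hZ0
  have hmZ1 : mZ ≤ 1 := by
    calc mZ ≤ μ[fun _ => (1:ℝ)] := integral_mono_ae (hZℒ.integrable one_le_two)
              (integrable_const 1) (hZb.mono fun ω h => h.2)
    _ = 1 := by simp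
  -- integrability facts
  have hiY : Integrable (fun ω => (Y ω - mY)^2) μ :=
    (hYℒ.sub (memLp_const mY)).integrable_sq
  have hiZ : Integrable (fun ω => (Z ω - mZ)^2) μ :=
    (hZℒ.sub (memLp_const mZ)).integrable_sq
  have hiW : Integrable (fun ω => (Y ω * Z ω - mY * mZ)^2) μ :=
    (hWℒ.sub (memLp_const (mY * mZ))).integrable_sq
  -- variance ≤ E[(W - c)^2]
  have hvarW : variance (fun ω => Y ω * Z ω) μ ≤ ∫ ω, (Y ω * Z ω - mY * mZ)^2 ∂μ := by
    have h1 : variance (fun ω => Y ω * Z ω) μ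
        = ∫ ω, (Y ω * Z ω)^2 ∂μ - (∫ ω, Y ω * Z ω ∂μ)^2 := by
      rw [variance_eq_sub hWℒ]; rfl
    have h2 : ∫ ω, (Y ω * Z ω - mY * mZ)^2 ∂μ
        = ∫ ω, (Y ω * Z ω)^2 ∂μ - 2 * (mY * mZ) * (∫ ω, Y ω * Z ω ∂μ) + (mY * mZ)^2 := by
      have : ∀ ω, (Y ω * Z ω - mY * mZ)^2
          = (Y ω * Z ω)^2 - 2 * (mY * mZ) * (Y ω * Z ω) + (mY * mZ)^2 := by
        intro ω; ring
      simp_rw [this]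
      rw [integral_add (by
          exact (hWℒ.integrable_sq.sub ((hWℒ.integrable one_le_two).const_mul _))) (integrable_const _),
        integral_sub hWℒ.integrable_sq ((hWℒ.integrable one_le_two).const_mul _),
        integral_const_mul, integral_const]
      simp
    rw [h1, h2]
    nlinarith [sq_nonneg ((∫ ω, Y ω * Z ω ∂μ) - mY * mZ)]
  -- pointwise bound
  have hpt : ∀ᵐ ω ∂μ, (Y ω * Z ω - mY * mZ)^2 ≤ 2 * (Y ω - mY)^2 + 2 * (Z ω - mZ)^2 := by
    filter_upwards [hYb] with ω h1
    have key : Y ω * Z ω - mY * mZ = Y ω * (Z ω - mZ) + mZ * (Y ω - mY) := by ring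
    have hY2 : (Y ω)^2 ≤ 1 := by nlinarith [h1.1, h1.2]
    have hmZ2 : mZ^2 ≤ 1 := by nlinarith
    have ha : (Y ω * (Z ω - mZ))^2 ≤ (Z ω - mZ)^2 := by
      rw [mul_pow]; exact mul_le_of_le_one_left (sq_nonneg _) hY2
    have hb : (mZ * (Y ω - mY))^2 ≤ (Y ω - mY)^2 := by
      rw [mul_pow]; exact mul_le_of_le_one_left (sq_nonneg _) hmZ2
    rw [key]
    nlinarith [sq_nonneg (Y ω * (Z ω - mZ) - mZ * (Y ω - mY))]
  have hint : ∫ ω, (Y ω * Z ω - mY * mZ)^2 ∂μ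
      ≤ ∫ ω, (2 * (Y ω - mY)^2 + 2 * (Z ω - mZ)^2) ∂μ :=
    integral_mono_ae hiW ((hiY.const_mul 2).add (hiZ.const_mul 2)) hpt
  have hsplit : ∫ ω, (2 * (Y ω - mY)^2 + 2 * (Z ω - mZ)^2) ∂μ
      = 2 * variance Y μ + 2 * variance Z μ := by
    rw [integral_add (hiY.const_mul 2) (hiZ.const_mul 2), integral_const_mul,
      integral_const_mul, variance_eq_integral hYm, variance_eq_integral hZm]
  have hvY := variance_nonneg Y μ
  have hvZ := variance_nonneg Z μ
  calc variance (fun ω => Y ω * Z ω) μ ≤ ∫ ω, (Y ω * Z ω - mY * mZ)^2 ∂μ := hvarW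
    _ ≤ 2 * variance Y μ + 2 * variance Z μ := by rw [← hsplit]; exact hint
    _ ≤ 8 * (variance Y μ + variance Z μ) := by linarith
end
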